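/- Let p and p̂ be two probability mass functions on a finite set 𝒮 (the joint symbol set) with p̂ strictly positive wherever p is positive, both conditional on an observation Y with joint law p(S, Y) = p_{Y|S}(Y|S)·p_S(S). Then the difference between the matched-decoding rate R = (1/T)(Σ_k B_k − E[log₂(1/p_{S|Y}(S|Y))]) and the generalized mutual information evaluated at s = 1, GMI(1) = (1/T)(Σ_k B_k − E[log₂(Σ_{s'} p̂_{S|Y}(s'|Y)/p̂_{S|Y}(S|Y))]) under uniform priors, equals (1/T)·E_Y[D(p_{S|Y}(·|Y) ‖ p̂_{S|Y}(·|Y))], the average Kullback–Leibler divergence between the true posterior and the approximate posterior. In particular GMI(1) ≤ R, with equality iff the posteriors agree almost surely. -/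

import Mathlib

open Finset

lemma gibbs_term_lt {p q : ℝ} (hp : 0 ≤ p) (hq : 0 < q) (hne : p ≠ q) :
    p - q < p * Real.log (p / q) := by
  rcases eq_or_lt_of_le hp with h | h
  · simp only [← h, zero_mul, zero_sub]
    linarith
  · have hx : 0 < q / p := div_pos hq h
    have hx1 : q / p ≠ 1 := by
      intro h1
      exact hne ((div_eq_one_iff_eq h.ne').mp h1).symm
    have hlt := Real.log_lt_sub_one_of_pos hx hx1
    have hlog : Real.log (q / p) = - Real.log (p / q) := by
      rw [← Real.log_inv]
      congr 1
      rw [inv_div]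
    rw [hlog] at hlt
    have := mul_lt_mul_of_pos_left hlt h
    have hdiv : p * (q / p - 1) = q - p := by field_simp
    nlinarith
lemma gibbs_term_le {p q : ℝ} (hp : 0 ≤ p) (hq : 0 < q) :
    p - q ≤ p * Real.log (p / q) := by
  rcases eq_or_ne p q with h | h
  · subst h; simp [Real.log_div hq.ne' hq.ne']
  · exact (gibbs_term_lt hp hq h).le

lemma gibbs_sum {α : Type*} [Fintype α] (p q : α → ℝ) (hp : ∀ s, 0 ≤ p s)
    (hq : ∀ s, 0 < q s) (hp1 : ∑ s, p s = 1) (hq1 : ∑ s, q s = 1) :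
    0 ≤ ∑ s, p s * Real.log (p s / q s) ∧
      ((∑ s, p s * Real.log (p s / q s)) = 0 ↔ ∀ s, p s = q s) := by
  have hle : ∀ s ∈ Finset.univ (α := α), p s - q s ≤ p s * Real.log (p s / q s) :=
    fun s _ => gibbs_term_le (hp s) (hq s)
  have hsumle : (0:ℝ) ≤ ∑ s, p s * Real.log (p s / q s) := by
    calc (0:ℝ) = ∑ s, (p s - q s) := by rw [Finset.sum_sub_distrib, hp1, hq1]; ring
    _ ≤ _ := Finset.sum_le_sum hle
  refine ⟨hsumle, ⟨?_, ?_⟩⟩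
  · intro h0
    by_contra hne
    push_neg at hne
    obtain ⟨s, hs⟩ := hne
    have hlt : ∑ s, (p s - q s) < ∑ s, p s * Real.log (p s / q s) :=
      Finset.sum_lt_sum hle ⟨s, Finset.mem_univ s, gibbs_term_lt (hp s) (hq s) hs⟩
    rw [Finset.sum_sub_distrib, hp1, hq1, h0] at hlt
    linarith
  · intro h
    apply Finset.sum_eq_zero
    intro s _
    rw [h s]
    simp [Real.log_div (hq s).ne' (hq s).ne']

/-- The gap between the matched-decoding rate `R` and the generalized mutual information
at `s = 1` equals the average (over the observation `Y`) Kullback–Leibler divergence between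
the true posterior and the approximate posterior; in particular `GMI(1) ≤ R`, with equality
iff the posteriors agree for every observation of positive probability. Here `α` is the
finite joint-symbol set (with uniform prior), `β` the finite observation alphabet, `w` the
joint PMF of `(S, Y)`, `q` the (strictly positive) approximate posterior, and `post` the
true posterior. -/
theorem gmi_gap_eq_avg_kl {α β : Type*} [Fintype α] [Fintype β] [Nonempty α] [Nonempty β]
    (T : ℝ) (hT : 0 < T)
    (w : α → β → ℝ) (hw : ∀ s y, 0 ≤ w s y)
    (hsum : ∑ s, ∑ y, w s y = 1)
    (hunif : ∀ s, ∑ y, w s y = 1 / (Fintype.card α : ℝ))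
    (hpos : ∀ y, 0 < ∑ s, w s y)
    (q : β → α → ℝ) (hq : ∀ y s, 0 < q y s) (hq1 : ∀ y, ∑ s, q y s = 1) :
    let post : β → α → ℝ := fun y s => w s y / ∑ s', w s' y
    let R : ℝ := (1 / T) * (Real.logb 2 (Fintype.card α)
      - ∑ s, ∑ y, w s y * Real.logb 2 (1 / post y s))
    let GMI1 : ℝ := (1 / T) * (Real.logb 2 (Fintype.card α)
      - ∑ s, ∑ y, w s y * Real.logb 2 ((∑ s', q y s') / q y s))
    let D : β → ℝ := fun y => ∑ s, post y s * Real.logb 2 (post y s / q y s)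
    (R - GMI1 = (1 / T) * ∑ y, (∑ s, w s y) * D y) ∧
    GMI1 ≤ R ∧
    (GMI1 = R ↔ ∀ y s, post y s = q y s) := by
  intro post R GMI1 D
  have hpostnn : ∀ y s, 0 ≤ post y s := fun y s => div_nonneg (hw s y) (hpos y).le
  have hpostsum : ∀ y, ∑ s, post y s = 1 := by
    intro y
    simp only [post]
    rw [← Finset.sum_div, div_self (hpos y).ne']
  -- termwise identity inside the gap
  have hterm : ∀ y s, w s y * Real.logb 2 ((∑ s', q y s') / q y s)
      - w s y * Real.logb 2 (1 / post y s)
      = (∑ s', w s' y) * (post y s * Real.logb 2 (post y s / q y s)) := by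
    intro y s
    rcases eq_or_lt_of_le (hw s y) with h0 | h0
    · have hp0 : post y s = 0 := by simp [post, ← h0]
      simp [← h0, hp0]
    · have hppos : 0 < post y s := div_pos h0 (hpos y)
      have hwps : (∑ s', w s' y) * post y s = w s y := by
        simp only [post]
        rw [mul_comm, div_mul_cancel₀ _ (hpos y).ne']
      rw [← mul_assoc, hwps, hq1 y, ← mul_sub]
      congr 1
      rw [Real.logb_div hppos.ne' (hq y s).ne', one_div, Real.logb_inv, one_div,
        Real.logb_inv]
      ring
  -- the gap identity
  have hgap : R - GMI1 = (1 / T) * ∑ y, (∑ s, w s y) * D y := by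
    have step1 : R - GMI1 = (1 / T) * ((∑ s, ∑ y, w s y * Real.logb 2 ((∑ s', q y s') / q y s))
        - ∑ s, ∑ y, w s y * Real.logb 2 (1 / post y s)) := by
      simp only [R, GMI1]
      ring
    have step2 : (∑ s, ∑ y, w s y * Real.logb 2 ((∑ s', q y s') / q y s))
        - (∑ s, ∑ y, w s y * Real.logb 2 (1 / post y s))
        = ∑ s, ∑ y, (w s y * Real.logb 2 ((∑ s', q y s') / q y s)
            - w s y * Real.logb 2 (1 / post y s)) := by
      rw [← Finset.sum_sub_distrib]
      exact Finset.sum_congr rfl fun s _ => (Finset.sum_sub_distrib _ _).symm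
    rw [step1, step2, Finset.sum_comm]
    congr 1
    apply Finset.sum_congr rfl
    intro y _
    simp only [D, Finset.mul_sum]
    exact Finset.sum_congr rfl fun s _ => hterm y s
  -- D y ≥ 0 and equality characterization
  have hlog2 : 0 < Real.log 2 := Real.log_pos one_lt_two
  have hDkey : ∀ y, 0 ≤ D y ∧ (D y = 0 ↔ ∀ s, post y s = q y s) := by
    intro y
    obtain ⟨hnn, hiff⟩ := gibbs_sum (post y) (q y) (hpostnn y) (hq y)
      (hpostsum y) (hq1 y)
    have hD : D y = (∑ s, post y s * Real.log (post y s / q y s)) / Real.log 2 := by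
      simp only [D, Real.logb, Finset.sum_div, mul_div_assoc]
    constructor
    · rw [hD]; positivity
    · rw [hD, div_eq_zero_iff]
      constructor
      · rintro (h | h)
        · exact hiff.mp h
        · exact absurd h hlog2.ne'
      · intro h; exact Or.inl (hiff.mpr h)
  have hDnn : ∀ y, 0 ≤ D y := fun y => (hDkey y).1
  have hsummand : ∀ y ∈ (Finset.univ : Finset β), 0 ≤ (∑ s, w s y) * D y :=
    fun y _ => mul_nonneg (hpos y).le (hDnn y)
  have hsumnn : 0 ≤ ∑ y, (∑ s, w s y) * D y := Finset.sum_nonneg hsummand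
  refine ⟨hgap, ?_, ?_⟩
  · have h1 : (0:ℝ) ≤ (1 / T) * ∑ y, (∑ s, w s y) * D y :=
      mul_nonneg (by positivity) hsumnn
    linarith [hgap]
  · constructor
    · intro heq
      have h0 : ∑ y, (∑ s, w s y) * D y = 0 := by
        have : R - GMI1 = 0 := by rw [heq]; ring
        rw [hgap] at this
        have hT' : (1 : ℝ) / T ≠ 0 := by positivity
        exact (mul_eq_zero.mp this).resolve_left hT'
      intro y s
      have hy : (∑ s, w s y) * D y = 0 :=
        (Finset.sum_eq_zero_iff_of_nonneg hsummand).mp h0 y (Finset.mem_univ y)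
      have hDy : D y = 0 := (mul_eq_zero.mp hy).resolve_left (hpos y).ne'
      exact ((hDkey y).2.mp hDy) s
    · intro h
      have h0 : ∀ y, D y = 0 := fun y => (hDkey y).2.mpr (h y)
      have : ∑ y, (∑ s, w s y) * D y = 0 :=
        Finset.sum_eq_zero fun y _ => by rw [h0 y, mul_zero]
      have := hgap
      rw [‹∑ y, (∑ s, w s y) * D y = 0›] at this
      linarith [this]
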